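/- arXiv:2603.25662 — 4 statements merged into one kernel-verified Lean document; each statement's English description precedes it below -/
import Mathlib

section
/- Every Θ-class of a daisy cube G ⊆ Q_n contains exactly one edge incident to the minimum vertex 0^n. -/
open SimpleGraph Function

/-- The hypercube graph `Q_n` on binary strings of length `n`. -/
def cubeGraph (n : ℕ) : SimpleGraph (Fin n → Bool) where
  Adj u v := hammingDist u v = 1
  symm := ⟨fun u v h => by simpa [hammingDist_comm] using h⟩
  loopless := ⟨fun u h => by simp [hammingDist_self] at h⟩

/-- The downward closure of a set of binary strings under the coordinatewise order. -/
def dClosure {n : ℕ} (X : Set (Fin n → Bool)) : Set (Fin n → Bool) :=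
  {u | ∃ x ∈ X, u ≤ x}

/-- The daisy cube `Q_n(X)`: the subgraph of `Q_n` induced by the downward closure of `X`. -/
def daisyCube (n : ℕ) (X : Set (Fin n → Bool)) : SimpleGraph (dClosure X) :=
  (cubeGraph n).induce (dClosure X)

/-- The τ-graph of a (coordinatized) partial cube `G ⊆ Q_n`, with Θ-classes identified with the
coordinates: two classes are adjacent iff incident edges, one flipping each coordinate, form a
convex path on three vertices. -/
def coordTau {n : ℕ} {V : Type*} (val : V → (Fin n → Bool)) (G : SimpleGraph V) :
    SimpleGraph (Fin n) where
  Adj i j := i ≠ j ∧ ∃ u v w : V, G.Adj u v ∧ G.Adj v w ∧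
      val u i ≠ val v i ∧ val v j ≠ val w j ∧
      ¬ G.Adj u w ∧ ∀ x : V, G.Adj u x → G.Adj w x → x = v
  symm := ⟨by
    rintro i j ⟨hij, u, v, w, h1, h2, h3, h4, h5, h6⟩
    exact ⟨hij.symm, w, v, u, h2.symm, h1.symm, fun h => h4 h.symm, fun h => h3 h.symm,
      fun h => h5 h.symm, fun x hw hu => h6 x hu hw⟩⟩
  loopless := ⟨by
    rintro i ⟨hij, _⟩
    exact hij rfl⟩


lemma hd_eq_one_of_single {n : ℕ} (u v : Fin n → Bool) (i : Fin n)
    (h : ∀ j, u j ≠ v j ↔ j = i) : hammingDist u v = 1 := by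
  unfold hammingDist
  rw [show ({j | u j ≠ v j} : Finset (Fin n)) = {i} by ext j; simp [h j]]
  simp

lemma single_of_hd_eq_one {n : ℕ} (u v : Fin n → Bool) (i : Fin n)
    (hd : hammingDist u v = 1) (hi : u i ≠ v i) : ∀ j, u j ≠ v j ↔ j = i := by
  unfold hammingDist at hd
  obtain ⟨k, hk⟩ := Finset.card_eq_one.mp hd
  have hik : i = k := by
    have : i ∈ ({j | u j ≠ v j} : Finset (Fin n)) := by simpa using hi
    simpa [hk] using this
  intro j
  constructor
  · intro hj
    have : j ∈ ({j | u j ≠ v j} : Finset (Fin n)) := by simpa using hj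
    rw [hk] at this
    simp at this
    simp [this, hik]
  · rintro rfl; exact hi

/-- Every Θ-class of a daisy cube `G ⊆ Q_n` (the Θ-class of coordinate `i`
consists of the edges whose endpoints differ in coordinate `i`) contains exactly one edge
incident to the minimum vertex `0^n`. -/
theorem daisyCube_theta_class_unique_edge_at_zero (n : ℕ) (X : Set (Fin n → Bool))
    (z : dClosure X) (hz : z.1 = fun _ => false) (i : Fin n)
    (hclass : ∃ u v : dClosure X, (daisyCube n X).Adj u v ∧ u.1 i ≠ v.1 i) :
    ∃! v : dClosure X, (daisyCube n X).Adj z v ∧ z.1 i ≠ v.1 i := by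
  classical
  set e : Fin n → Bool := fun j => decide (j = i) with he
  obtain ⟨u, v, huv, hne⟩ := hclass
  -- find a witness with value true at i
  have hmem : e ∈ dClosure X := by
    rcases Bool.eq_false_or_eq_true (u.1 i) with h | h
    · obtain ⟨x, hx, hle⟩ := u.2
      refine ⟨x, hx, fun j => ?_⟩
      by_cases hj : j = i
      · subst hj
        have h1 := hle j
        rw [h] at h1
        have h2 : e j = true := by simp [he]
        rw [h2]; exact h1
      · simp [he, hj]
    · have hv : v.1 i = true := by
        cases hv : v.1 i
        · exact absurd (h.trans hv.symm) hne
        · rfl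
      obtain ⟨x, hx, hle⟩ := v.2
      refine ⟨x, hx, fun j => ?_⟩
      by_cases hj : j = i
      · subst hj
        have h1 := hle j
        rw [hv] at h1
        have h2 : e j = true := by simp [he]
        rw [h2]; exact h1
      · simp [he, hj]
  have hzi : z.1 i = false := by rw [hz]
  have hsingle : ∀ j, z.1 j ≠ e j ↔ j = i := by
    intro j
    constructor
    · intro hj
      by_contra hji
      apply hj
      rw [hz]
      simp [he, hji]
    · rintro rfl
      rw [hz]
      simp [he]
  refine ⟨⟨e, hmem⟩, ⟨?_, ?_⟩, ?_⟩
  · exact hd_eq_one_of_single _ _ i hsingle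
  · exact (hsingle i).mpr rfl
  · rintro ⟨w, hwmem⟩ ⟨hadj, hwi⟩
    have hs := single_of_hd_eq_one z.1 w i hadj hwi
    apply Subtype.ext
    funext j
    show w j = e j
    by_cases hj : j = i
    · subst hj
      have := (hs j).mpr rfl
      rw [hzi] at this
      simp [he]
      cases hw : w j
      · exact absurd hw.symm this
      · rfl
    · have : ¬ (z.1 j ≠ w j) := fun h => hj ((hs j).mp h)
      push_neg at this
      rw [← this, hz]
      simp [he, hj]
end

section
/- The Lucas cube Λ_n (n ≥ 3) is isomorphic to the simplex graph of the complement of the cycle C_n. -/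
open SimpleGraph Function

/-- The simplex graph `K(G)` of a graph `G`: vertices are the cliques of `G` (as finite sets,
including the empty clique), two cliques adjacent iff they differ in exactly one vertex. -/
def simplexGraph {V : Type*} [DecidableEq V] (G : SimpleGraph V) :
    SimpleGraph {s : Finset V // G.IsClique (s : Set V)} where
  Adj s t := (symmDiff s.1 t.1).card = 1
  symm := ⟨fun s t h => by simpa [symmDiff_comm] using h⟩
  loopless := ⟨fun s h => by simp [symmDiff_self] at h⟩

/-- Binary strings of length `n` with no two cyclically consecutive 1's. -/
def lucasSet (n : ℕ) : Set (Fin n → Bool) :=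
  {u | ∀ i j : Fin n, ((i : ℕ) + 1) % n = (j : ℕ) → ¬(u i = true ∧ u j = true)}

/-- The Lucas cube `Λ_n`. -/
def lucasCube (n : ℕ) : SimpleGraph (lucasSet n) :=
  (cubeGraph n).induce (lucasSet n)


private lemma cyc_succ_iff {n : ℕ} (hn : 3 ≤ n) (i j : Fin n) :
    ((i : ℕ) + 1) % n = (j : ℕ) ↔ (j - i).val = 1 := by
  haveI : NeZero n := ⟨by omega⟩
  have h1 : ((1 : Fin n) : ℕ) = 1 := by
    rw [Fin.val_one']; exact Nat.mod_eq_of_lt (by omega)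
  have hadd : ((i + 1 : Fin n) : ℕ) = ((i : ℕ) + 1) % n := by
    rw [Fin.val_add, h1]
  constructor
  · intro h
    have hj : j = i + 1 := Fin.ext (by rw [hadd, h])
    have : j - i = 1 := by rw [hj]; exact add_sub_cancel_left i 1
    rw [this, h1]
  · intro h
    have : j - i = 1 := Fin.ext (by rw [h, h1])
    have hj : j = i + 1 := by
      have := sub_eq_iff_eq_add.mp this
      rw [this]; exact add_comm 1 i
    rw [← hadd, hj]

private lemma lucas_iff_clique {n : ℕ} (hn : 3 ≤ n) (u : Fin n → Bool) :
    u ∈ lucasSet n ↔ (SimpleGraph.cycleGraph n)ᶜ.IsClique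
      ((Finset.univ.filter fun i => u i = true : Finset (Fin n)) : Set (Fin n)) := by
  constructor
  · intro h i hi j hj hij
    simp only [Finset.coe_filter, Set.mem_setOf_eq, Finset.mem_univ, true_and] at hi hj
    refine ⟨hij, ?_⟩
    rw [SimpleGraph.cycleGraph_adj']
    rintro (h1 | h1)
    · exact h j i ((cyc_succ_iff hn j i).mpr h1) ⟨hj, hi⟩
    · exact h i j ((cyc_succ_iff hn i j).mpr h1) ⟨hi, hj⟩
  · intro h i j hmod ⟨hi, hj⟩
    have hij : i ≠ j := by
      rintro rfl
      rcases Nat.lt_or_ge ((i : ℕ) + 1) n with hlt | hge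
      · rw [Nat.mod_eq_of_lt hlt] at hmod; omega
      · have hin : (i : ℕ) < n := i.isLt
        have : (i : ℕ) + 1 = n := by omega
        rw [this, Nat.mod_self] at hmod; omega
    have := h (by simp [hi]) (by simp [hj]) hij
    exact this.2 (SimpleGraph.cycleGraph_adj'.mpr (Or.inr ((cyc_succ_iff hn i j).mp hmod)))

private lemma hamming_symmDiff {n : ℕ} (u v : Fin n → Bool) :
    hammingDist u v =
      (symmDiff (Finset.univ.filter fun i => u i = true)
        (Finset.univ.filter fun i => v i = true)).card := by
  unfold hammingDist
  congr 1
  ext i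
  simp only [Finset.mem_filter, Finset.mem_univ, true_and, Finset.mem_symmDiff]
  cases u i <;> cases v i <;> simp

/-- The Lucas cube `Λ_n` (`n ≥ 3`) is isomorphic to the simplex graph of the
complement of the cycle `C_n`. -/
theorem lucasCube_iso_simplex_compl_cycle (n : ℕ) (hn : 3 ≤ n) :
    Nonempty (lucasCube n ≃g simplexGraph (SimpleGraph.cycleGraph n)ᶜ) := by
  classical
  refine ⟨{
    toFun := fun u => ⟨Finset.univ.filter (fun i => u.1 i = true),
      (lucas_iff_clique hn u.1).1 u.2⟩
    invFun := fun s => ⟨fun i => decide (i ∈ s.1), by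
      have hf : (Finset.univ.filter fun i => decide (i ∈ s.1) = true) = s.1 := by
        ext i; simp
      rw [lucas_iff_clique hn, hf]
      exact s.2⟩
    left_inv := fun u => by
      apply Subtype.ext; funext i; simp
    right_inv := fun s => by
      apply Subtype.ext; ext i; simp
    map_rel_iff' := by
      intro u v
      change (symmDiff (Finset.univ.filter fun i => u.1 i = true)
          (Finset.univ.filter fun i => v.1 i = true)).card = 1
          ↔ hammingDist u.1 v.1 = 1
      rw [hamming_symmDiff] }⟩
end

section
/- If G is a partial cube and F_ab = {e ∈ E(G) : e Θ ab} is the Θ-class of an edge ab, then the spanning subgraph G − F_ab obtained by deleting the edges in F_ab has exactly two connected components, with vertex sets W_ab = {w : d(w,a) < d(w,b)} and W_ba = {w : d(w,b) < d(w,a)}. -/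
open SimpleGraph Function

/-- A partial cube: a connected graph isometrically embeddable into a hypercube. -/
def IsPartialCube {V : Type*} (G : SimpleGraph V) : Prop :=
  G.Connected ∧ ∃ (n : ℕ) (f : V → (Fin n → Bool)), Function.Injective f ∧
    ∀ u v : V, (cubeGraph n).dist (f u) (f v) = G.dist u v

/-- The Djoković–Winkler relation Θ on (ordered) edges `ab`, `cd`. -/
def ThetaRel {V : Type*} (G : SimpleGraph V) (a b c d : V) : Prop :=
  G.Adj a b ∧ G.Adj c d ∧ G.dist a c + G.dist b d ≠ G.dist a d + G.dist b c

/-- The Θ-class `F_ab` of the edge `ab`, as a set of unordered edges. -/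
def thetaClass {V : Type*} (G : SimpleGraph V) (a b : V) : Set (Sym2 V) :=
  {e | ∃ x y : V, e = s(x, y) ∧ ThetaRel G x y a b}

/-- The set `W_ab` of vertices strictly closer to `a` than to `b`. -/
def Wside {V : Type*} (G : SimpleGraph V) (a b : V) : Set V :=
  {w | G.dist w a < G.dist w b}

/-- Parity of a binary string, in `ZMod 2`. -/
private def bsum {n : ℕ} (x : Fin n → Bool) : ZMod 2 := ∑ i, if x i then 1 else 0

private lemma hd_parity {n : ℕ} (x y : Fin n → Bool) :
    (hammingDist x y : ZMod 2) = bsum x + bsum y := by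
  unfold bsum
  rw [hammingDist, Finset.card_filter, Nat.cast_sum, ← Finset.sum_add_distrib]
  refine Finset.sum_congr rfl fun i _ => ?_
  cases hx : x i <;> cases hy : y i <;> simp [hx, hy] <;> decide

private lemma walk_parity {n : ℕ} {V : Type*} {G : SimpleGraph V}
    (f : V → (Fin n → Bool)) (hf : ∀ u v : V, G.Adj u v → hammingDist (f u) (f v) = 1)
    {u v : V} (p : G.Walk u v) : (p.length : ZMod 2) = bsum (f u) + bsum (f v) := by
  induction p with
  | nil =>
    have : ∀ x : ZMod 2, 0 = x + x := by decide
    simpa using this _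
  | @cons u w v h p ih =>
    have h1 : (1 : ZMod 2) = bsum (f u) + bsum (f w) := by
      have := hd_parity (f u) (f w)
      rwa [hf u w h, Nat.cast_one] at this
    have key : ∀ x y z : ZMod 2, (x + y) + (y + z) = x + z := by decide
    calc ((p.length + 1 : ℕ) : ZMod 2) = 1 + (p.length : ℕ) := by push_cast; ring
    _ = (bsum (f u) + bsum (f w)) + (bsum (f w) + bsum (f v)) := by rw [← h1, ← ih]
    _ = bsum (f u) + bsum (f v) := key _ _ _

/-- If `G` is a partial cube and `F_ab` is the Θ-class of an edge `ab`, then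
the spanning subgraph `G − F_ab` has exactly two connected components, with vertex sets
`W_ab` and `W_ba`: two vertices are reachable from one another in `G − F_ab` iff they lie both
in `W_ab` or both in `W_ba`. -/
theorem partialCube_delete_theta_class_components {V : Type*} (G : SimpleGraph V)
    (hpc : IsPartialCube G) (a b : V) (hab : G.Adj a b) :
    ∀ u v : V, (G.deleteEdges (thetaClass G a b)).Reachable u v ↔
      ((u ∈ Wside G a b ∧ v ∈ Wside G a b) ∨ (u ∈ Wside G b a ∧ v ∈ Wside G b a)) := by
  obtain ⟨hconn, n, f, -, hdist⟩ := hpc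
  -- edges of `G` map to Hamming-distance-one pairs
  have hedge : ∀ u v : V, G.Adj u v → hammingDist (f u) (f v) = 1 := by
    intro u v h
    have h1 : G.dist u v = 1 := SimpleGraph.dist_eq_one_iff_adj.mpr h
    have h2 : (cubeGraph n).dist (f u) (f v) = 1 := by rw [hdist, h1]
    exact SimpleGraph.dist_eq_one_iff_adj.mp h2
  -- parity of distances
  have hdpar : ∀ u v : V, (G.dist u v : ZMod 2) = bsum (f u) + bsum (f v) := by
    intro u v
    obtain ⟨p, hp⟩ := hconn.exists_walk_length_eq_dist u v
    rw [← hp]; exact walk_parity f hedge p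
  -- bipartiteness: distances to the two ends of an edge differ
  have hbip : ∀ w : V, G.dist w a ≠ G.dist w b := by
    intro w heq
    have h2 : (1 : ZMod 2) = bsum (f a) + bsum (f b) := by
      have h3 := hdpar a b
      rwa [SimpleGraph.dist_eq_one_iff_adj.mpr hab, Nat.cast_one] at h3
    have h1 : ((G.dist w a : ℕ) : ZMod 2) + (G.dist w b : ℕ) = 1 := by
      rw [hdpar w a, hdpar w b]
      have key : ∀ x y z : ZMod 2, (x + y) + (x + z) = y + z := by decide
      rw [key, ← h2]
    rw [heq] at h1
    have : ∀ x : ZMod 2, x + x ≠ 1 := by decide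
    exact this _ h1
  -- triangle inequality along an edge
  have htri : ∀ x y c : V, G.Adj x y → G.dist x c ≤ G.dist y c + 1 := by
    intro x y c h
    calc G.dist x c ≤ G.dist x y + G.dist y c := hconn.dist_triangle
    _ = G.dist y c + 1 := by rw [SimpleGraph.dist_eq_one_iff_adj.mpr h]; ring
  have hWab : ∀ w ∈ Wside G a b, G.dist w b = G.dist w a + 1 := by
    intro w hw
    have h0 : G.dist w a < G.dist w b := hw
    have h1 : G.dist w b ≤ G.dist w a + 1 := by
      have h2 := hconn.dist_triangle (u := w) (v := a) (w := b)
      rwa [SimpleGraph.dist_eq_one_iff_adj.mpr hab] at h2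
    omega
  have hWba : ∀ w ∈ Wside G b a, G.dist w a = G.dist w b + 1 := by
    intro w hw
    have h0 : G.dist w b < G.dist w a := hw
    have h1 : G.dist w a ≤ G.dist w b + 1 := by
      have h2 := hconn.dist_triangle (u := w) (v := b) (w := a)
      rwa [SimpleGraph.dist_eq_one_iff_adj.mpr hab.symm] at h2
    omega
  have hsides : ∀ w : V, w ∈ Wside G a b ∨ w ∈ Wside G b a := by
    intro w
    rcases lt_or_gt_of_ne (hbip w) with h | h
    · exact Or.inl h
    · exact Or.inr h
  -- a Θ-related edge has its endpoints on opposite sides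
  have hcross : ∀ x y : V, ThetaRel G x y a b →
      ¬(x ∈ Wside G a b ∧ y ∈ Wside G a b) ∧ ¬(x ∈ Wside G b a ∧ y ∈ Wside G b a) := by
    rintro x y ⟨hxy, -, hne⟩
    constructor
    · rintro ⟨hx, hy⟩
      have h1 := hWab x hx; have h2 := hWab y hy; omega
    · rintro ⟨hx, hy⟩
      have h1 := hWba x hx; have h2 := hWba y hy; omega
  -- a crossing edge is Θ-related to `ab`
  have hcross2 : ∀ x y : V, G.Adj x y → x ∈ Wside G a b → y ∈ Wside G b a →
      ThetaRel G x y a b := by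
    intro x y h hx hy
    refine ⟨h, hab, ?_⟩
    have h1 := hWab x hx; have h2 := hWba y hy; omega
  -- edges with both ends on the same side are not in the Θ-class
  have hnotclass : ∀ x y : V,
      ((x ∈ Wside G a b ∧ y ∈ Wside G a b) ∨ (x ∈ Wside G b a ∧ y ∈ Wside G b a)) →
      s(x, y) ∉ thetaClass G a b := by
    rintro x y hxy ⟨p, q, heq, hΘ⟩
    rcases Sym2.eq_iff.mp heq with ⟨rfl, rfl⟩ | ⟨rfl, rfl⟩
    · have := hcross x y hΘ; tauto
    · have := hcross y x hΘ; tauto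
  set D := G.deleteEdges (thetaClass G a b) with hDdef
  -- every vertex of `W_ab` reaches `a` in the deleted graph
  have reachA : ∀ k : ℕ, ∀ u : V, G.dist u a = k → u ∈ Wside G a b → D.Reachable u a := by
    intro k
    induction k using Nat.strong_induction_on with
    | _ k ih =>
      intro u hk hu
      rcases Nat.eq_zero_or_pos k with rfl | hkpos
      · have : u = a := (hconn.dist_eq_zero_iff).mp hk
        exact this ▸ SimpleGraph.Reachable.refl _
      · obtain ⟨p, hp⟩ := hconn.exists_walk_length_eq_dist u a
        cases p with
        | nil => exact SimpleGraph.Reachable.refl _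
        | @cons _ w _ h q =>
          rw [SimpleGraph.Walk.length_cons] at hp
          have hqa : G.dist w a ≤ q.length := SimpleGraph.dist_le q
          have hub : G.dist u b = G.dist u a + 1 := hWab u hu
          have hub2 : G.dist u b ≤ G.dist w b + 1 := htri u w b h
          have hw : w ∈ Wside G a b := by
            show G.dist w a < G.dist w b
            omega
          have hDadj : D.Adj u w := by
            rw [hDdef, SimpleGraph.deleteEdges_adj]
            exact ⟨h, hnotclass u w (Or.inl ⟨hu, hw⟩)⟩
          exact hDadj.reachable.trans
            (ih (G.dist w a) (by omega) w rfl hw)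
  -- every vertex of `W_ba` reaches `b` in the deleted graph
  have reachB : ∀ k : ℕ, ∀ u : V, G.dist u b = k → u ∈ Wside G b a → D.Reachable u b := by
    intro k
    induction k using Nat.strong_induction_on with
    | _ k ih =>
      intro u hk hu
      rcases Nat.eq_zero_or_pos k with rfl | hkpos
      · have : u = b := (hconn.dist_eq_zero_iff).mp hk
        exact this ▸ SimpleGraph.Reachable.refl _
      · obtain ⟨p, hp⟩ := hconn.exists_walk_length_eq_dist u b
        cases p with
        | nil => exact SimpleGraph.Reachable.refl _
        | @cons _ w _ h q =>
          rw [SimpleGraph.Walk.length_cons] at hp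
          have hqb : G.dist w b ≤ q.length := SimpleGraph.dist_le q
          have hua : G.dist u a = G.dist u b + 1 := hWba u hu
          have hua2 : G.dist u a ≤ G.dist w a + 1 := htri u w a h
          have hw : w ∈ Wside G b a := by
            show G.dist w b < G.dist w a
            omega
          have hDadj : D.Adj u w := by
            rw [hDdef, SimpleGraph.deleteEdges_adj]
            exact ⟨h, hnotclass u w (Or.inr ⟨hu, hw⟩)⟩
          exact hDadj.reachable.trans
            (ih (G.dist w b) (by omega) w rfl hw)
  -- walks in the deleted graph stay on one side
  have key : ∀ {x y : V}, D.Walk x y →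
      (x ∈ Wside G a b → y ∈ Wside G a b) ∧ (x ∈ Wside G b a → y ∈ Wside G b a) := by
    intro x y p
    induction p with
    | nil => exact ⟨id, id⟩
    | @cons x z y h q ih =>
      obtain ⟨hGadj, hnot⟩ := SimpleGraph.deleteEdges_adj.mp h
      constructor
      · intro hx
        refine ih.1 ?_
        rcases hsides z with hz | hz
        · exact hz
        · exact absurd ⟨x, z, rfl, hcross2 x z hGadj hx hz⟩ hnot
      · intro hx
        refine ih.2 ?_
        rcases hsides z with hz | hz
        · have hΘ : ThetaRel G x z a b := by
            refine ⟨hGadj, hab, ?_⟩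
            have h1 := hWba x hx; have h2 := hWab z hz; omega
          exact absurd ⟨x, z, rfl, hΘ⟩ hnot
        · exact hz
  intro u v
  constructor
  · rintro ⟨p⟩
    rcases hsides u with hu | hu
    · exact Or.inl ⟨hu, (key p).1 hu⟩
    · exact Or.inr ⟨hu, (key p).2 hu⟩
  · rintro (⟨hu, hv⟩ | ⟨hu, hv⟩)
    · exact (reachA _ u rfl hu).trans (reachA _ v rfl hv).symm
    · exact (reachB _ u rfl hu).trans (reachB _ v rfl hv).symm
end

section
/- The τ-graph of a Cartesian product of partial cubes is the disjoint union of the τ-graphs of its factors: τ(G₁ □ G₂) ≅ τ(G₁) ⊔ τ(G₂). -/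
open SimpleGraph Function

/-- The Θ-classes of a graph, as sets of unordered edges. -/
def IsThetaClass {V : Type*} (G : SimpleGraph V) (D : Set (Sym2 V)) : Prop :=
  ∃ a b : V, G.Adj a b ∧ D = {e | ∃ x y : V, e = s(x, y) ∧ ThetaRel G x y a b}

/-- The τ-graph of a partial cube: vertices are the Θ-classes, two classes adjacent iff there
are incident edges, one from each class, forming a convex path on three vertices. -/
def tauGraph {V : Type*} (G : SimpleGraph V) :
    SimpleGraph {D : Set (Sym2 V) // IsThetaClass G D} where
  Adj D₁ D₂ := D₁ ≠ D₂ ∧ ∃ u v w : V, G.Adj u v ∧ G.Adj v w ∧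
      s(u, v) ∈ D₁.1 ∧ s(v, w) ∈ D₂.1 ∧
      ¬ G.Adj u w ∧ ∀ x : V, G.Adj u x → G.Adj w x → x = v
  symm := ⟨by
    rintro D₁ D₂ ⟨hne, u, v, w, h1, h2, h3, h4, h5, h6⟩
    refine ⟨hne.symm, w, v, u, h2.symm, h1.symm, ?_, ?_, fun h => h5 h.symm,
      fun x hw hu => h6 x hu hw⟩
    · rw [Sym2.eq_swap]; exact h4
    · rw [Sym2.eq_swap]; exact h3⟩
  loopless := ⟨by rintro D ⟨hne, _⟩; exact hne rfl⟩

namespace PCaux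

lemma cube_walk_exists {n : ℕ} : ∀ (k : ℕ) (u v : Fin n → Bool), hammingDist u v = k →
    ∃ p : (cubeGraph n).Walk u v, p.length = k := by
  intro k
  induction k with
  | zero => intro u v h; rw [hammingDist_eq_zero] at h; subst h; exact ⟨SimpleGraph.Walk.nil, rfl⟩
  | succ k ih =>
    intro u v h
    have hne : u ≠ v := by
      intro he; subst he; simp [hammingDist_self] at h
    have : ∃ i, u i ≠ v i := by
      by_contra hc
      push_neg at hc
      exact hne (funext hc)
    obtain ⟨i, hi⟩ := this
    set u' := Function.update u i (v i) with hu'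
    have hadj : (cubeGraph n).Adj u u' := by
      show hammingDist u u' = 1
      unfold hammingDist
      rw [Finset.card_eq_one]
      refine ⟨i, ?_⟩
      ext j
      simp only [Finset.mem_filter, Finset.mem_univ, true_and, Finset.mem_singleton, hu',
        Function.update_apply]
      constructor
      · intro hj; by_contra hji; simp [hji] at hj
      · intro hj; subst hj; simp [hi]
    have hham : hammingDist u' v = k := by
      have hfil : ({j | u' j ≠ v j} : Finset (Fin n)) = ({j | u j ≠ v j} : Finset (Fin n)).erase i := by
        ext j
        simp only [Finset.mem_filter, Finset.mem_univ, true_and, Finset.mem_erase, hu',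
          Function.update_apply]
        constructor
        · intro hj
          rcases eq_or_ne j i with rfl | hji
          · simp at hj
          · simp [hji] at hj; exact ⟨hji, hj⟩
        · rintro ⟨hji, hj⟩; simp [hji]; exact hj
      have : hammingDist u' v = hammingDist u v - 1 := by
        unfold hammingDist
        rw [hfil, Finset.card_erase_of_mem]
        simp [hi]
      omega
    obtain ⟨p, hp⟩ := ih u' v hham
    exact ⟨SimpleGraph.Walk.cons hadj p, by simp [hp]⟩

lemma cube_walk_lb {n : ℕ} {u v : Fin n → Bool} (p : (cubeGraph n).Walk u v) :
    hammingDist u v ≤ p.length := by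
  induction p with
  | nil => simp
  | cons h p ih =>
    calc hammingDist _ _ ≤ hammingDist _ _ + hammingDist _ _ := hammingDist_triangle _ _ _
    _ ≤ 1 + p.length := by rw [h]; omega
    _ = _ := by simp [Nat.add_comm]

lemma cubeGraph_dist {n : ℕ} (u v : Fin n → Bool) :
    (cubeGraph n).dist u v = hammingDist u v := by
  obtain ⟨p, hp⟩ := cube_walk_exists (hammingDist u v) u v rfl
  refine le_antisymm (hp ▸ SimpleGraph.dist_le p) ?_
  obtain ⟨q, hq⟩ := SimpleGraph.Reachable.exists_walk_length_eq_dist ⟨p⟩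
  calc hammingDist u v ≤ q.length := cube_walk_lb q
  _ = _ := hq

variable {V : Type*} {n : ℕ}

/-- Edge `ab` flips coordinate `i`. -/
def flips (f : V → Fin n → Bool) (G : SimpleGraph V) (a b : V) (i : Fin n) : Prop :=
  G.Adj a b ∧ f a i ≠ f b i

def classOf (f : V → Fin n → Bool) (G : SimpleGraph V) (i : Fin n) : Set (Sym2 V) :=
  {e | ∃ x y, e = s(x, y) ∧ flips f G x y i}

variable {f : V → Fin n → Bool} {G : SimpleGraph V}

lemma flips_symm {a b : V} {i : Fin n} (h : flips f G a b i) : flips f G b a i :=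
  ⟨h.1.symm, fun he => h.2 he.symm⟩

lemma mem_classOf {a b : V} {i : Fin n} :
    s(a, b) ∈ classOf f G i ↔ flips f G a b i := by
  constructor
  · rintro ⟨x, y, hxy, hfl⟩
    rw [Sym2.eq_iff] at hxy
    rcases hxy with ⟨rfl, rfl⟩ | ⟨rfl, rfl⟩
    · exact hfl
    · exact flips_symm hfl
  · intro h; exact ⟨a, b, rfl, h⟩

variable (hf : ∀ u v, hammingDist (f u) (f v) = G.dist u v)
include hf

lemma ham_eq_one {a b : V} (hab : G.Adj a b) : hammingDist (f a) (f b) = 1 := by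
  rw [hf]; exact SimpleGraph.dist_eq_one_iff_adj.2 hab

lemma exists_flips {a b : V} (hab : G.Adj a b) : ∃ i, flips f G a b i := by
  have h1 := ham_eq_one hf hab
  unfold hammingDist at h1
  rw [Finset.card_eq_one] at h1
  obtain ⟨i, hi⟩ := h1
  have : i ∈ ({j | f a j ≠ f b j} : Finset (Fin n)) := by rw [hi]; simp
  simp only [Finset.mem_filter, Finset.mem_univ, true_and] at this
  exact ⟨i, hab, this⟩

lemma flips_unique {a b : V} {i j : Fin n} (h : flips f G a b i) (h' : f a j ≠ f b j) :
    j = i := by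
  have h1 := ham_eq_one hf h.1
  unfold hammingDist at h1
  rw [Finset.card_eq_one] at h1
  obtain ⟨k, hk⟩ := h1
  have hi : i ∈ ({j | f a j ≠ f b j} : Finset (Fin n)) := by simp [h.2]
  have hj : j ∈ ({j | f a j ≠ f b j} : Finset (Fin n)) := by simp [h']
  rw [hk, Finset.mem_singleton] at hi hj
  rw [hj, hi]

omit hf in
lemma ham_eq_sum (u v : Fin n → Bool) :
    hammingDist u v = ∑ i, if u i = v i then 0 else 1 := by
  unfold hammingDist
  rw [Finset.card_filter]
  exact Finset.sum_congr rfl fun i _ => by by_cases h : u i = v i <;> simp [h]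

omit hf in
lemma sum_ne_of {g1 g2 : Fin n → ℕ} {i : Fin n}
    (hrest : ∀ k, k ≠ i → g1 k = g2 k) (hi : g1 i ≠ g2 i) :
    ∑ k, g1 k ≠ ∑ k, g2 k := by
  rw [← Finset.add_sum_erase _ g1 (Finset.mem_univ i),
    ← Finset.add_sum_erase _ g2 (Finset.mem_univ i),
    Finset.sum_congr rfl (fun k hk => hrest k (Finset.mem_erase.1 hk).1)]
  intro h
  exact hi (Nat.add_right_cancel h)

lemma theta_iff {a b c d : V} {i j : Fin n}
    (hi : flips f G a b i) (hj : flips f G c d j) :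
    ThetaRel G a b c d ↔ i = j := by
  have hab := hi.1
  have hcd := hj.1
  have hbi : f b i = !(f a i) := by
    cases hab_ : f a i <;> cases hbb : f b i <;> simp_all [flips]
  have hdj : f d j = !(f c j) := by
    cases h_ : f c j <;> cases h2 : f d j <;> simp_all [flips]
  have hbk : ∀ k, k ≠ i → f b k = f a k := by
    intro k hk
    by_contra hc
    exact hk (flips_unique hf hi fun he => hc he.symm)
  have hdk : ∀ k, k ≠ j → f d k = f c k := by
    intro k hk
    by_contra hc
    exact hk (flips_unique hf hj fun he => hc he.symm)
  have key : (G.dist a c + G.dist b d ≠ G.dist a d + G.dist b c) ↔ i = j := by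
    rw [← hf, ← hf, ← hf, ← hf, ham_eq_sum (f a) (f c), ham_eq_sum (f b) (f d),
      ham_eq_sum (f a) (f d), ham_eq_sum (f b) (f c),
      ← Finset.sum_add_distrib, ← Finset.sum_add_distrib]
    rcases eq_or_ne i j with rfl | hij
    · refine iff_of_true (sum_ne_of (i := i) ?_ ?_) rfl
      · intro k hk
        rw [hbk k hk, hdk k hk]
      · rw [hbi, hdj]
        cases f a i <;> cases f c i <;> simp
    · refine iff_of_false (fun hne => hne ?_) hij
      refine Finset.sum_congr rfl fun k _ => ?_
      rcases eq_or_ne k i with rfl | hki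
      · rw [hdk k hij, hbi]
      · rcases eq_or_ne k j with rfl | hkj
        · rw [hbk k hki, hdj]
          cases f a k <;> cases f c k <;> simp
        · rw [hbk k hki, hdk k hkj]
  unfold ThetaRel
  rw [key]
  tauto

lemma genClass {a b : V} {i : Fin n} (hi : flips f G a b i) :
    {e | ∃ x y, e = s(x, y) ∧ ThetaRel G x y a b} = classOf f G i := by
  ext e
  constructor
  · rintro ⟨x, y, rfl, ht⟩
    obtain ⟨i', hfl⟩ := exists_flips hf ht.1
    have : i' = i := (theta_iff hf hfl hi).1 ht
    subst this
    exact ⟨x, y, rfl, hfl⟩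
  · rintro ⟨x, y, rfl, hfl⟩
    exact ⟨x, y, rfl, (theta_iff hf hfl hi).2 rfl⟩

lemma isThetaClass_iff {D : Set (Sym2 V)} :
    IsThetaClass G D ↔ ∃ i, (∃ a b, flips f G a b i) ∧ D = classOf f G i := by
  constructor
  · rintro ⟨a, b, hab, rfl⟩
    obtain ⟨i, hfl⟩ := exists_flips hf hab
    exact ⟨i, ⟨a, b, hfl⟩, genClass hf hfl⟩
  · rintro ⟨i, ⟨a, b, hfl⟩, rfl⟩
    exact ⟨a, b, hfl.1, (genClass hf hfl).symm⟩

lemma classOf_inj {a b : V} {i j : Fin n} (hi : flips f G a b i)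
    (h : classOf f G i = classOf f G j) : i = j := by
  have : s(a, b) ∈ classOf f G j := h ▸ mem_classOf.2 hi
  have hj := mem_classOf.1 this
  exact (flips_unique hf hi hj.2).symm ▸ rfl

omit hf

lemma ham_append {n₁ n₂ : ℕ} (u u' : Fin n₁ → Bool) (v v' : Fin n₂ → Bool) :
    hammingDist (Fin.append u v) (Fin.append u' v') = hammingDist u u' + hammingDist v v' := by
  rw [ham_eq_sum, ham_eq_sum, ham_eq_sum, Fin.sum_univ_add]
  congr 1
  · exact Finset.sum_congr rfl fun i _ => by rw [Fin.append_left, Fin.append_left]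
  · exact Finset.sum_congr rfl fun i _ => by rw [Fin.append_right, Fin.append_right]

lemma castAdd_ne_natAdd {n₁ n₂ : ℕ} (i : Fin n₁) (j : Fin n₂) :
    Fin.castAdd n₂ i ≠ Fin.natAdd n₁ j := by
  intro h
  have := congrArg Fin.val h
  simp [Fin.castAdd, Fin.natAdd] at this
  omega

lemma castAdd_inj {n₁ n₂ : ℕ} {i i' : Fin n₁} (h : Fin.castAdd n₂ i = Fin.castAdd n₂ i') :
    i = i' := by
  have := congrArg Fin.val h
  simpa [Fin.ext_iff] using this

lemma natAdd_inj {n₁ n₂ : ℕ} {j j' : Fin n₂} (h : Fin.natAdd n₁ j = Fin.natAdd n₁ j') :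
    j = j' := by
  have := congrArg Fin.val h
  simp [Fin.natAdd] at this
  exact Fin.ext (by omega)

variable {α β : Type*} {G₁ : SimpleGraph α} {G₂ : SimpleGraph β}

lemma boxProd_walk_lb (h₁ : G₁.Connected) (h₂ : G₂.Connected) :
    ∀ {u v : α × β} (p : (G₁ □ G₂).Walk u v),
      G₁.dist u.1 v.1 + G₂.dist u.2 v.2 ≤ p.length := by
  intro u v p
  induction p with
  | nil => simp
  | @cons u w v h p ih =>
    rcases (SimpleGraph.boxProd_adj.1 h) with ⟨ha, he⟩ | ⟨he, ha⟩
    · have t1 : G₁.dist u.1 v.1 ≤ 1 + G₁.dist w.1 v.1 := by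
        have := h₁.dist_triangle (u := u.1) (v := w.1) (w := v.1)
        have hd : G₁.dist u.1 w.1 = 1 := SimpleGraph.dist_eq_one_iff_adj.2 ha
        omega
      rw [he]
      simp only [SimpleGraph.Walk.length_cons]
      omega
    · have t2 : G₂.dist u.2 v.2 ≤ 1 + G₂.dist w.2 v.2 := by
        have := h₂.dist_triangle (u := u.2) (v := w.2) (w := v.2)
        have hd : G₂.dist u.2 w.2 = 1 := SimpleGraph.dist_eq_one_iff_adj.2 he
        omega
      rw [ha]
      simp only [SimpleGraph.Walk.length_cons]
      omega

lemma boxProd_dist (h₁ : G₁.Connected) (h₂ : G₂.Connected) (u v : α × β) :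
    (G₁ □ G₂).dist u v = G₁.dist u.1 v.1 + G₂.dist u.2 v.2 := by
  obtain ⟨p₁, hp₁⟩ := h₁.exists_walk_length_eq_dist u.1 v.1
  obtain ⟨p₂, hp₂⟩ := h₂.exists_walk_length_eq_dist u.2 v.2
  have hw : ((p₁.boxProdLeft G₂ u.2).append (p₂.boxProdRight G₁ v.1) :
      (G₁ □ G₂).Walk (u.1, u.2) (v.1, v.2)).length = G₁.dist u.1 v.1 + G₂.dist u.2 v.2 := by
    rw [SimpleGraph.Walk.length_append]
    simp [SimpleGraph.Walk.boxProdLeft, SimpleGraph.Walk.boxProdRight, SimpleGraph.Walk.length_map, hp₁, hp₂]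
    exact congrArg₂ (· + ·) ((SimpleGraph.Walk.length_map _ _).trans hp₁)
      ((SimpleGraph.Walk.length_map _ _).trans hp₂)
  refine le_antisymm ?_ ?_
  · calc (G₁ □ G₂).dist u v ≤ _ := SimpleGraph.dist_le _
    _ = _ := hw
  · obtain ⟨q, hq⟩ := ((h₁.boxProd h₂).exists_walk_length_eq_dist u v)
    calc G₁.dist u.1 v.1 + G₂.dist u.2 v.2 ≤ q.length := boxProd_walk_lb h₁ h₂ q
    _ = _ := hq

variable {n₁ n₂ : ℕ} {f₁ : α → Fin n₁ → Bool} {f₂ : β → Fin n₂ → Bool}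

lemma flips_prod_iff {u v : α × β} {c : Fin (n₁ + n₂)} :
    flips (fun p : α × β => Fin.append (f₁ p.1) (f₂ p.2)) (G₁ □ G₂) u v c ↔
      (∃ i, c = Fin.castAdd n₂ i ∧ u.2 = v.2 ∧ flips f₁ G₁ u.1 v.1 i) ∨
      (∃ j, c = Fin.natAdd n₁ j ∧ u.1 = v.1 ∧ flips f₂ G₂ u.2 v.2 j) := by
  constructor
  · rintro ⟨hadj, hne⟩
    rcases SimpleGraph.boxProd_adj.1 hadj with ⟨ha, he⟩ | ⟨he, ha⟩
    · refine Or.inl ?_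
      induction c using Fin.addCases with
      | left i =>
        refine ⟨i, rfl, he, ha, ?_⟩
        simpa [Fin.append_left] using hne
      | right j =>
        exfalso
        apply hne
        simp [Fin.append_right, he]
    · refine Or.inr ?_
      induction c using Fin.addCases with
      | left i =>
        exfalso
        apply hne
        simp [Fin.append_left, ha]
      | right j =>
        refine ⟨j, rfl, ha, he, ?_⟩
        simpa [Fin.append_right] using hne
  · rintro (⟨i, rfl, he, hadj, hne⟩ | ⟨j, rfl, he, hadj, hne⟩)
    · exact ⟨SimpleGraph.boxProd_adj.2 (Or.inl ⟨hadj, he⟩), by simpa [Fin.append_left] using hne⟩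
    · exact ⟨SimpleGraph.boxProd_adj.2 (Or.inr ⟨hadj, he⟩), by simpa [Fin.append_right] using hne⟩

lemma tauGraph_adj_iff {W : Type*} (G : SimpleGraph W)
    (D₁ D₂ : {D : Set (Sym2 W) // IsThetaClass G D}) :
    (tauGraph G).Adj D₁ D₂ ↔ (D₁.1 ≠ D₂.1 ∧ ∃ u v w : W, G.Adj u v ∧ G.Adj v w ∧
      s(u, v) ∈ D₁.1 ∧ s(v, w) ∈ D₂.1 ∧
      ¬ G.Adj u w ∧ ∀ x : W, G.Adj u x → G.Adj w x → x = v) := by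
  show (D₁ ≠ D₂ ∧ _) ↔ _
  exact and_congr (not_congr Subtype.ext_iff) Iff.rfl

end PCaux

/-- The τ-graph of a Cartesian product of partial cubes is the disjoint
union of the τ-graphs of its factors: `τ(G₁ □ G₂) ≅ τ(G₁) ⊔ τ(G₂)`. -/
theorem tauGraph_boxProd {α β : Type*} (G₁ : SimpleGraph α) (G₂ : SimpleGraph β)
    (h₁ : IsPartialCube G₁) (h₂ : IsPartialCube G₂) :
    Nonempty (tauGraph (G₁ □ G₂) ≃g (tauGraph G₁).sum (tauGraph G₂)) := by
  classical
  obtain ⟨conn₁, n₁, f₁, -, hfc₁⟩ := h₁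
  obtain ⟨conn₂, n₂, f₂, -, hfc₂⟩ := h₂
  have hf₁ : ∀ u v, hammingDist (f₁ u) (f₁ v) = G₁.dist u v := fun u v =>
    (PCaux.cubeGraph_dist _ _).symm.trans (hfc₁ u v)
  have hf₂ : ∀ u v, hammingDist (f₂ u) (f₂ v) = G₂.dist u v := fun u v =>
    (PCaux.cubeGraph_dist _ _).symm.trans (hfc₂ u v)
  obtain ⟨x₀⟩ := conn₂.nonempty
  obtain ⟨a₀⟩ := conn₁.nonempty
  set Gp := G₁ □ G₂ with hGp
  set F : α × β → Fin (n₁ + n₂) → Bool := fun p => Fin.append (f₁ p.1) (f₂ p.2) with hFdef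
  have hF : ∀ u v, hammingDist (F u) (F v) = Gp.dist u v := by
    intro u v
    rw [hGp, PCaux.boxProd_dist conn₁ conn₂, hFdef]
    simp only
    rw [PCaux.ham_append, hf₁, hf₂]
  have hclass : ∀ (u v : α × β) (c : Fin (n₁ + n₂)), PCaux.flips F Gp u v c ↔
      ((∃ i, c = Fin.castAdd n₂ i ∧ u.2 = v.2 ∧ PCaux.flips f₁ G₁ u.1 v.1 i) ∨
       (∃ j, c = Fin.natAdd n₁ j ∧ u.1 = v.1 ∧ PCaux.flips f₂ G₂ u.2 v.2 j)) := by
    intro u v c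
    rw [hFdef, hGp]
    exact PCaux.flips_prod_iff
  -- the lifts of edge sets
  set L₁ : Set (Sym2 α) → Set (Sym2 (α × β)) := fun S =>
    {e | ∃ a b y, e = s((a, y), (b, y)) ∧ s(a, b) ∈ S} with hL₁def
  set L₂ : Set (Sym2 β) → Set (Sym2 (α × β)) := fun S =>
    {e | ∃ x y a, e = s((a, x), (a, y)) ∧ s(x, y) ∈ S} with hL₂def
  have hL₁ : ∀ i, L₁ (PCaux.classOf f₁ G₁ i) = PCaux.classOf F Gp (Fin.castAdd n₂ i) := by
    intro i
    ext e
    constructor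
    · rintro ⟨a, b, y, rfl, hmem⟩
      exact ⟨(a, y), (b, y), rfl,
        (hclass (a, y) (b, y) _).2 (Or.inl ⟨i, rfl, rfl, PCaux.mem_classOf.1 hmem⟩)⟩
    · rintro ⟨⟨ua, ux⟩, ⟨va, vx⟩, rfl, hfl⟩
      rcases (hclass _ _ _).1 hfl with ⟨i', hci, he2, hfla⟩ | ⟨j, hcj, -, -⟩
      · obtain rfl := PCaux.castAdd_inj hci
        obtain rfl : ux = vx := he2
        exact ⟨ua, va, ux, rfl, PCaux.mem_classOf.2 hfla⟩
      · exact absurd hcj (PCaux.castAdd_ne_natAdd _ _)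
  have hL₂ : ∀ j, L₂ (PCaux.classOf f₂ G₂ j) = PCaux.classOf F Gp (Fin.natAdd n₁ j) := by
    intro j
    ext e
    constructor
    · rintro ⟨x, y, a, rfl, hmem⟩
      exact ⟨(a, x), (a, y), rfl,
        (hclass (a, x) (a, y) _).2 (Or.inr ⟨j, rfl, rfl, PCaux.mem_classOf.1 hmem⟩)⟩
    · rintro ⟨⟨ua, ux⟩, ⟨va, vx⟩, rfl, hfl⟩
      rcases (hclass _ _ _).1 hfl with ⟨i', hci, -, -⟩ | ⟨j', hcj, he1, hflb⟩
      · exact absurd hci.symm (PCaux.castAdd_ne_natAdd _ _)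
      · obtain rfl := PCaux.natAdd_inj hcj
        obtain rfl : ua = va := he1
        exact ⟨ux, vx, ua, rfl, PCaux.mem_classOf.2 hflb⟩
  have hTCL₁ : ∀ D : Set (Sym2 α), IsThetaClass G₁ D → IsThetaClass Gp (L₁ D) := by
    intro D hD
    obtain ⟨i, ⟨a, b, hfl⟩, rfl⟩ := (PCaux.isThetaClass_iff hf₁).1 hD
    rw [hL₁ i]
    exact (PCaux.isThetaClass_iff hF).2 ⟨Fin.castAdd n₂ i,
      ⟨(a, x₀), (b, x₀), (hclass (a, x₀) (b, x₀) _).2 (Or.inl ⟨i, rfl, rfl, hfl⟩)⟩, rfl⟩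
  have hTCL₂ : ∀ D : Set (Sym2 β), IsThetaClass G₂ D → IsThetaClass Gp (L₂ D) := by
    intro D hD
    obtain ⟨j, ⟨x, y, hfl⟩, rfl⟩ := (PCaux.isThetaClass_iff hf₂).1 hD
    rw [hL₂ j]
    exact (PCaux.isThetaClass_iff hF).2 ⟨Fin.natAdd n₁ j,
      ⟨(a₀, x), (a₀, y), (hclass (a₀, x) (a₀, y) _).2 (Or.inr ⟨j, rfl, rfl, hfl⟩)⟩, rfl⟩
  let Φ : ({D : Set (Sym2 α) // IsThetaClass G₁ D} ⊕ {D : Set (Sym2 β) // IsThetaClass G₂ D}) →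
      {D : Set (Sym2 (α × β)) // IsThetaClass Gp D} := fun s =>
    match s with
    | Sum.inl D => ⟨L₁ D.1, hTCL₁ D.1 D.2⟩
    | Sum.inr D => ⟨L₂ D.1, hTCL₂ D.1 D.2⟩
  have hinj : Function.Injective Φ := by
    rintro (D | D) (D' | D') h
    · have hval : L₁ D.1 = L₁ D'.1 := congrArg Subtype.val h
      obtain ⟨i, ⟨a, b, hfl⟩, hDeq⟩ := (PCaux.isThetaClass_iff hf₁).1 D.2
      obtain ⟨i', ⟨a', b', hfl'⟩, hDeq'⟩ := (PCaux.isThetaClass_iff hf₁).1 D'.2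
      rw [hDeq, hDeq', hL₁ i, hL₁ i'] at hval
      have hcc : Fin.castAdd n₂ i = Fin.castAdd n₂ i' :=
        PCaux.classOf_inj hF ((hclass (a, x₀) (b, x₀) _).2 (Or.inl ⟨i, rfl, rfl, hfl⟩)) hval
      obtain rfl := PCaux.castAdd_inj hcc
      exact congrArg Sum.inl (Subtype.ext (hDeq.trans hDeq'.symm))
    · exfalso
      have hval : L₁ D.1 = L₂ D'.1 := congrArg Subtype.val h
      obtain ⟨i, ⟨a, b, hfl⟩, hDeq⟩ := (PCaux.isThetaClass_iff hf₁).1 D.2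
      have hmem : s((a, x₀), (b, x₀)) ∈ L₁ D.1 :=
        ⟨a, b, x₀, rfl, hDeq ▸ PCaux.mem_classOf.2 hfl⟩
      rw [hval] at hmem
      obtain ⟨x, y, a', heq, -⟩ := hmem
      rw [Sym2.eq_iff] at heq
      rcases heq with ⟨h1, h2⟩ | ⟨h1, h2⟩ <;>
        exact G₁.ne_of_adj hfl.1 (((Prod.ext_iff.1 h1).1).trans ((Prod.ext_iff.1 h2).1).symm)
    · exfalso
      have hval : L₂ D.1 = L₁ D'.1 := congrArg Subtype.val h
      obtain ⟨j, ⟨x, y, hfl⟩, hDeq⟩ := (PCaux.isThetaClass_iff hf₂).1 D.2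
      have hmem : s((a₀, x), (a₀, y)) ∈ L₂ D.1 :=
        ⟨x, y, a₀, rfl, hDeq ▸ PCaux.mem_classOf.2 hfl⟩
      rw [hval] at hmem
      obtain ⟨a', b', y', heq, -⟩ := hmem
      rw [Sym2.eq_iff] at heq
      rcases heq with ⟨h1, h2⟩ | ⟨h1, h2⟩ <;>
        exact G₂.ne_of_adj hfl.1 (((Prod.ext_iff.1 h1).2).trans ((Prod.ext_iff.1 h2).2).symm)
    · have hval : L₂ D.1 = L₂ D'.1 := congrArg Subtype.val h
      obtain ⟨j, ⟨x, y, hfl⟩, hDeq⟩ := (PCaux.isThetaClass_iff hf₂).1 D.2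
      obtain ⟨j', ⟨x', y', hfl'⟩, hDeq'⟩ := (PCaux.isThetaClass_iff hf₂).1 D'.2
      rw [hDeq, hDeq', hL₂ j, hL₂ j'] at hval
      have hcc : Fin.natAdd n₁ j = Fin.natAdd n₁ j' :=
        PCaux.classOf_inj hF ((hclass (a₀, x) (a₀, y) _).2 (Or.inr ⟨j, rfl, rfl, hfl⟩)) hval
      obtain rfl := PCaux.natAdd_inj hcc
      exact congrArg Sum.inr (Subtype.ext (hDeq.trans hDeq'.symm))
  have hsurj : Function.Surjective Φ := by
    rintro ⟨D, hD⟩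
    obtain ⟨c, ⟨u, v, hfl⟩, rfl⟩ := (PCaux.isThetaClass_iff hF).1 hD
    rcases (hclass _ _ _).1 hfl with ⟨i, rfl, he2, hfl1⟩ | ⟨j, rfl, he1, hfl2⟩
    · exact ⟨Sum.inl ⟨PCaux.classOf f₁ G₁ i,
        (PCaux.isThetaClass_iff hf₁).2 ⟨i, ⟨u.1, v.1, hfl1⟩, rfl⟩⟩, Subtype.ext (hL₁ i)⟩
    · exact ⟨Sum.inr ⟨PCaux.classOf f₂ G₂ j,
        (PCaux.isThetaClass_iff hf₂).2 ⟨j, ⟨u.2, v.2, hfl2⟩, rfl⟩⟩, Subtype.ext (hL₂ j)⟩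
  -- mixed pairs give no τ-adjacency
  have mixed : ∀ (S₁ : Set (Sym2 α)) (S₂ : Set (Sym2 β)),
      ¬ ∃ u v w : α × β, Gp.Adj u v ∧ Gp.Adj v w ∧ s(u, v) ∈ L₁ S₁ ∧ s(v, w) ∈ L₂ S₂ ∧
        ¬ Gp.Adj u w ∧ ∀ x : α × β, Gp.Adj u x → Gp.Adj w x → x = v := by
    rintro S₁ S₂ ⟨u, v, w, huv, hvw, hm1, hm2, -, huniq⟩
    obtain ⟨a, b, y, heq1, -⟩ := hm1
    obtain ⟨x, y', a', heq2, -⟩ := hm2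
    have he2 : u.2 = v.2 := by
      rw [Sym2.eq_iff] at heq1
      rcases heq1 with ⟨rfl, rfl⟩ | ⟨rfl, rfl⟩ <;> rfl
    have he1 : v.1 = w.1 := by
      rw [Sym2.eq_iff] at heq2
      rcases heq2 with ⟨rfl, rfl⟩ | ⟨rfl, rfl⟩ <;> rfl
    have hadj1 : G₁.Adj u.1 v.1 := by
      rcases SimpleGraph.boxProd_adj.1 huv with ⟨h, -⟩ | ⟨h, he⟩
      · exact h
      · exact absurd (he2 ▸ h) (G₂.loopless.irrefl _)
    have hadj2 : G₂.Adj v.2 w.2 := by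
      rcases SimpleGraph.boxProd_adj.1 hvw with ⟨h, he⟩ | ⟨h, -⟩
      · exact absurd (he1 ▸ h) (G₁.loopless.irrefl _)
      · exact h
    have h1 : Gp.Adj u (u.1, w.2) :=
      SimpleGraph.boxProd_adj.2 (Or.inr ⟨he2 ▸ hadj2, rfl⟩)
    have h2 : Gp.Adj w (u.1, w.2) :=
      SimpleGraph.boxProd_adj.2 (Or.inl ⟨(he1 ▸ hadj1).symm, rfl⟩)
    have := huniq _ h1 h2
    exact G₁.ne_of_adj hadj1 (Prod.ext_iff.1 this).1
  -- transfer of τ-adjacency within the first factor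
  have key11 : ∀ (i i' : Fin n₁), (∃ a b, PCaux.flips f₁ G₁ a b i) →
      ((PCaux.classOf F Gp (Fin.castAdd n₂ i) ≠ PCaux.classOf F Gp (Fin.castAdd n₂ i') ∧
        ∃ u v w : α × β, Gp.Adj u v ∧ Gp.Adj v w ∧
          s(u, v) ∈ PCaux.classOf F Gp (Fin.castAdd n₂ i) ∧
          s(v, w) ∈ PCaux.classOf F Gp (Fin.castAdd n₂ i') ∧
          ¬ Gp.Adj u w ∧ ∀ x : α × β, Gp.Adj u x → Gp.Adj w x → x = v) ↔
       (PCaux.classOf f₁ G₁ i ≠ PCaux.classOf f₁ G₁ i' ∧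
        ∃ a b c : α, G₁.Adj a b ∧ G₁.Adj b c ∧
          s(a, b) ∈ PCaux.classOf f₁ G₁ i ∧ s(b, c) ∈ PCaux.classOf f₁ G₁ i' ∧
          ¬ G₁.Adj a c ∧ ∀ m : α, G₁.Adj a m → G₁.Adj c m → m = b)) := by
    intro i i' hused
    have hcc : PCaux.classOf f₁ G₁ i ≠ PCaux.classOf f₁ G₁ i' ↔
        PCaux.classOf F Gp (Fin.castAdd n₂ i) ≠ PCaux.classOf F Gp (Fin.castAdd n₂ i') := by
      obtain ⟨a, b, hfl⟩ := hused
      constructor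
      · intro hne heq
        have h := PCaux.classOf_inj hF
          ((hclass (a, x₀) (b, x₀) _).2 (Or.inl ⟨i, rfl, rfl, hfl⟩)) heq
        exact hne (by rw [PCaux.castAdd_inj h])
      · intro hne heq
        exact hne (by rw [PCaux.classOf_inj hf₁ hfl heq])
    constructor
    · rintro ⟨hne, u, v, w, huv, hvw, hm1, hm2, hnadj, huniq⟩
      refine ⟨hcc.2 hne, u.1, v.1, w.1, ?_⟩
      have hfl1 := PCaux.mem_classOf.1 hm1
      have hfl2 := PCaux.mem_classOf.1 hm2
      rcases (hclass _ _ _).1 hfl1 with ⟨i₁, hci, he2, hfla⟩ | ⟨j₁, hcj, -, -⟩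
      swap
      · exact absurd hcj (PCaux.castAdd_ne_natAdd _ _)
      rcases (hclass _ _ _).1 hfl2 with ⟨i₂, hci', he2', hflb⟩ | ⟨j₂, hcj', -, -⟩
      swap
      · exact absurd hcj' (PCaux.castAdd_ne_natAdd _ _)
      obtain rfl := PCaux.castAdd_inj hci
      obtain rfl := PCaux.castAdd_inj hci'
      refine ⟨hfla.1, hflb.1, PCaux.mem_classOf.2 hfla, PCaux.mem_classOf.2 hflb, ?_, ?_⟩
      · intro hac
        exact hnadj (SimpleGraph.boxProd_adj.2 (Or.inl ⟨hac, he2.trans he2'⟩))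
      · intro m hma hmc
        have h := huniq (m, u.2) (SimpleGraph.boxProd_adj.2 (Or.inl ⟨hma, rfl⟩))
          (SimpleGraph.boxProd_adj.2 (Or.inl ⟨hmc, (he2.trans he2').symm⟩))
        exact (Prod.ext_iff.1 h).1
    · rintro ⟨hne, a, b, c, hab, hbc, hm1, hm2, hnadj, huniq⟩
      have hfla := PCaux.mem_classOf.1 hm1
      have hflb := PCaux.mem_classOf.1 hm2
      have hac : a ≠ c := by
        rintro rfl
        have h : i' = i := PCaux.flips_unique hf₁ hfla (PCaux.flips_symm hflb).2
        exact hne (by rw [h])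
      refine ⟨hcc.1 hne, (a, x₀), (b, x₀), (c, x₀),
        SimpleGraph.boxProd_adj.2 (Or.inl ⟨hab, rfl⟩),
        SimpleGraph.boxProd_adj.2 (Or.inl ⟨hbc, rfl⟩),
        PCaux.mem_classOf.2 ((hclass (a, x₀) (b, x₀) _).2 (Or.inl ⟨i, rfl, rfl, hfla⟩)),
        PCaux.mem_classOf.2 ((hclass (b, x₀) (c, x₀) _).2 (Or.inl ⟨i', rfl, rfl, hflb⟩)), ?_, ?_⟩
      · intro h
        rcases SimpleGraph.boxProd_adj.1 h with ⟨h1, -⟩ | ⟨h2, -⟩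
        · exact hnadj h1
        · exact G₂.loopless.irrefl _ h2
      · rintro ⟨m, z⟩ h1 h2
        rcases SimpleGraph.boxProd_adj.1 h1 with ⟨ha1, hz1⟩ | ⟨ha1, hz1⟩ <;>
          rcases SimpleGraph.boxProd_adj.1 h2 with ⟨ha2, hz2⟩ | ⟨ha2, hz2⟩
        · have hz1' : x₀ = z := hz1
          have hm' : m = b := huniq m ha1 ha2
          rw [← hz1', hm']
        · have hz1' : x₀ = z := hz1
          have ha2' : G₂.Adj x₀ z := ha2
          rw [← hz1'] at ha2'
          exact absurd ha2' (G₂.loopless.irrefl _)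
        · have hz2' : x₀ = z := hz2
          have ha1' : G₂.Adj x₀ z := ha1
          rw [← hz2'] at ha1'
          exact absurd ha1' (G₂.loopless.irrefl _)
        · have hz1' : a = m := hz1
          have hz2' : c = m := hz2
          exact absurd (hz1'.trans hz2'.symm) hac
  -- transfer of τ-adjacency within the second factor
  have key22 : ∀ (j j' : Fin n₂), (∃ x y, PCaux.flips f₂ G₂ x y j) →
      ((PCaux.classOf F Gp (Fin.natAdd n₁ j) ≠ PCaux.classOf F Gp (Fin.natAdd n₁ j') ∧
        ∃ u v w : α × β, Gp.Adj u v ∧ Gp.Adj v w ∧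
          s(u, v) ∈ PCaux.classOf F Gp (Fin.natAdd n₁ j) ∧
          s(v, w) ∈ PCaux.classOf F Gp (Fin.natAdd n₁ j') ∧
          ¬ Gp.Adj u w ∧ ∀ x : α × β, Gp.Adj u x → Gp.Adj w x → x = v) ↔
       (PCaux.classOf f₂ G₂ j ≠ PCaux.classOf f₂ G₂ j' ∧
        ∃ a b c : β, G₂.Adj a b ∧ G₂.Adj b c ∧
          s(a, b) ∈ PCaux.classOf f₂ G₂ j ∧ s(b, c) ∈ PCaux.classOf f₂ G₂ j' ∧
          ¬ G₂.Adj a c ∧ ∀ m : β, G₂.Adj a m → G₂.Adj c m → m = b)) := by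
    intro j j' hused
    have hcc : PCaux.classOf f₂ G₂ j ≠ PCaux.classOf f₂ G₂ j' ↔
        PCaux.classOf F Gp (Fin.natAdd n₁ j) ≠ PCaux.classOf F Gp (Fin.natAdd n₁ j') := by
      obtain ⟨x, y, hfl⟩ := hused
      constructor
      · intro hne heq
        have h := PCaux.classOf_inj hF
          ((hclass (a₀, x) (a₀, y) _).2 (Or.inr ⟨j, rfl, rfl, hfl⟩)) heq
        exact hne (by rw [PCaux.natAdd_inj h])
      · intro hne heq
        exact hne (by rw [PCaux.classOf_inj hf₂ hfl heq])
    constructor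
    · rintro ⟨hne, u, v, w, huv, hvw, hm1, hm2, hnadj, huniq⟩
      refine ⟨hcc.2 hne, u.2, v.2, w.2, ?_⟩
      have hfl1 := PCaux.mem_classOf.1 hm1
      have hfl2 := PCaux.mem_classOf.1 hm2
      rcases (hclass _ _ _).1 hfl1 with ⟨i₁, hci, -, -⟩ | ⟨j₁, hcj, he1, hfla⟩
      · exact absurd hci.symm (PCaux.castAdd_ne_natAdd _ _)
      rcases (hclass _ _ _).1 hfl2 with ⟨i₂, hci', -, -⟩ | ⟨j₂, hcj', he1', hflb⟩
      · exact absurd hci'.symm (PCaux.castAdd_ne_natAdd _ _)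
      obtain rfl := PCaux.natAdd_inj hcj
      obtain rfl := PCaux.natAdd_inj hcj'
      refine ⟨hfla.1, hflb.1, PCaux.mem_classOf.2 hfla, PCaux.mem_classOf.2 hflb, ?_, ?_⟩
      · intro hac
        exact hnadj (SimpleGraph.boxProd_adj.2 (Or.inr ⟨hac, he1.trans he1'⟩))
      · intro m hma hmc
        have h := huniq (u.1, m) (SimpleGraph.boxProd_adj.2 (Or.inr ⟨hma, rfl⟩))
          (SimpleGraph.boxProd_adj.2 (Or.inr ⟨hmc, (he1.trans he1').symm⟩))
        exact (Prod.ext_iff.1 h).2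
    · rintro ⟨hne, a, b, c, hab, hbc, hm1, hm2, hnadj, huniq⟩
      have hfla := PCaux.mem_classOf.1 hm1
      have hflb := PCaux.mem_classOf.1 hm2
      have hac : a ≠ c := by
        rintro rfl
        have h : j' = j := PCaux.flips_unique hf₂ hfla (PCaux.flips_symm hflb).2
        exact hne (by rw [h])
      refine ⟨hcc.1 hne, (a₀, a), (a₀, b), (a₀, c),
        SimpleGraph.boxProd_adj.2 (Or.inr ⟨hab, rfl⟩),
        SimpleGraph.boxProd_adj.2 (Or.inr ⟨hbc, rfl⟩),
        PCaux.mem_classOf.2 ((hclass (a₀, a) (a₀, b) _).2 (Or.inr ⟨j, rfl, rfl, hfla⟩)),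
        PCaux.mem_classOf.2 ((hclass (a₀, b) (a₀, c) _).2 (Or.inr ⟨j', rfl, rfl, hflb⟩)), ?_, ?_⟩
      · intro h
        rcases SimpleGraph.boxProd_adj.1 h with ⟨h1, -⟩ | ⟨h2, -⟩
        · exact G₁.loopless.irrefl _ h1
        · exact hnadj h2
      · rintro ⟨m, z⟩ h1 h2
        rcases SimpleGraph.boxProd_adj.1 h1 with ⟨ha1, hz1⟩ | ⟨ha1, hz1⟩ <;>
          rcases SimpleGraph.boxProd_adj.1 h2 with ⟨ha2, hz2⟩ | ⟨ha2, hz2⟩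
        · have hz1' : a = z := hz1
          have hz2' : c = z := hz2
          exact absurd (hz1'.trans hz2'.symm) hac
        · have hz2' : a₀ = m := hz2
          have ha1' : G₁.Adj a₀ m := ha1
          rw [← hz2'] at ha1'
          exact absurd ha1' (G₁.loopless.irrefl _)
        · have hz1' : a₀ = m := hz1
          have ha2' : G₁.Adj a₀ m := ha2
          rw [← hz1'] at ha2'
          exact absurd ha2' (G₁.loopless.irrefl _)
        · have hz1' : a₀ = m := hz1
          have hz' : z = b := huniq z ha1 ha2
          rw [← hz1', hz']
  have hrel : ∀ s t, (tauGraph Gp).Adj (Φ s) (Φ t) ↔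
      ((tauGraph G₁).sum (tauGraph G₂)).Adj s t := by
    rintro (D | D) (D' | D')
    · obtain ⟨i, husedi, hDeq⟩ := (PCaux.isThetaClass_iff hf₁).1 D.2
      obtain ⟨i', husedi', hDeq'⟩ := (PCaux.isThetaClass_iff hf₁).1 D'.2
      show (tauGraph Gp).Adj ⟨L₁ D.1, _⟩ ⟨L₁ D'.1, _⟩ ↔ (tauGraph G₁).Adj D D'
      rw [PCaux.tauGraph_adj_iff, PCaux.tauGraph_adj_iff]
      simp only [hDeq, hDeq', hL₁]
      exact key11 i i' husedi
    · refine iff_of_false (fun h => ?_) (fun h => by simp at h)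
      rw [PCaux.tauGraph_adj_iff] at h
      exact mixed D.1 D'.1 h.2
    · refine iff_of_false (fun h => ?_) (fun h => by simp at h)
      replace h := h.symm
      rw [PCaux.tauGraph_adj_iff] at h
      exact mixed D'.1 D.1 h.2
    · obtain ⟨j, husedj, hDeq⟩ := (PCaux.isThetaClass_iff hf₂).1 D.2
      obtain ⟨j', husedj', hDeq'⟩ := (PCaux.isThetaClass_iff hf₂).1 D'.2
      show (tauGraph Gp).Adj ⟨L₂ D.1, _⟩ ⟨L₂ D'.1, _⟩ ↔ (tauGraph G₂).Adj D D'
      rw [PCaux.tauGraph_adj_iff, PCaux.tauGraph_adj_iff]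
      simp only [hDeq, hDeq', hL₂]
      exact key22 j j' husedj
  exact ⟨(SimpleGraph.Iso.symm ⟨Equiv.ofBijective Φ ⟨hinj, hsurj⟩, hrel _ _⟩)⟩
end
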